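/- Let p be a prime, B a group, and let W be the wreath product of B by the cyclic group ZMod p, realized as the semidirect product (Fin p → B) ⋊ ZMod p where a generator of ZMod p acts by cyclically shifting the coordinates. Then for every tuple r : Fin p → B, the element (r, 0) of W lies in the commutator subgroup of W if and only if the product r 0 * r 1 * ⋯ * r (p-1) lies in the commutator subgroup of B. -/

import Mathlib

open Fin.NatCast in
/-- Casting `ZMod p`-values to `Fin p` (via `ZMod.val`) is additive. -/
theorem castValAdd (p : ℕ) [NeZero p] (x y : ZMod p) :
    (((x + y).val : Fin p)) = ((x.val : Fin p) + (y.val : Fin p)) := by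
  ext
  rw [Fin.val_add, Fin.val_natCast, Fin.val_natCast, Fin.val_natCast, ZMod.val_add,
    Nat.mod_mod_of_dvd _ dvd_rfl, ← Nat.add_mod]

/-- The multiplicative automorphism of the direct power `α → B` given by
precomposition with a permutation of the index set. -/
def permMulAut {α : Type*} {B : Type*} [Group B] (e : Equiv.Perm α) :
    MulAut (α → B) where
  toFun f := f ∘ e
  invFun f := f ∘ e.symm
  left_inv f := by ext x; simp
  right_inv f := by ext x; simp
  map_mul' f g := rfl

open Fin.NatCast in
/-- The action of the cyclic group `ZMod p` (written multiplicatively) on the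
direct power `Fin p → B` by cyclically shifting the coordinates:
`c` sends `f` to `fun i => f (i + c)`. -/
def cyclicShift (p : ℕ) [NeZero p] (B : Type*) [Group B] :
    Multiplicative (ZMod p) →* MulAut (Fin p → B) where
  toFun c := permMulAut (B := B) (Equiv.addRight (((Multiplicative.toAdd c).val : Fin p)))
  map_one' := by
    ext f i
    simp [permMulAut]
  map_mul' c d := by
    ext f i
    simp only [permMulAut, MulAut.mul_apply, MulEquiv.coe_mk, Equiv.coe_fn_mk,
      Function.comp_apply, Equiv.coe_addRight, toAdd_mul]
    rw [castValAdd, ← add_assoc]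

theorem abelOfEqOne {G : Type*} [Group G] (x : G) :
    Abelianization.of x = 1 ↔ x ∈ commutator G := QuotientGroup.eq_one_iff x

section MeldrumAux
open SemidirectProduct
open Fin.NatCast
variable (p : ℕ) [NeZero p] {B : Type*} [Group B]

/-- Product-of-coordinates homomorphism to the abelianization of `B`. -/
def baseProd : (Fin p → B) →* Abelianization B where
  toFun f := ∏ i, Abelianization.of (f i)
  map_one' := by simp
  map_mul' f g := by simp [Finset.prod_mul_distrib]

lemma baseProd_shift (c : Multiplicative (ZMod p)) (f : Fin p → B) :
    baseProd p (cyclicShift p B c f) = baseProd p f :=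
  Equiv.prod_comp (Equiv.addRight (((Multiplicative.toAdd c).val : Fin p)))
    (fun i => Abelianization.of (f i))

variable (B) in
/-- The induced homomorphism from the wreath product to the abelianization of `B`. -/
def wreathProd : SemidirectProduct (Fin p → B) (Multiplicative (ZMod p)) (cyclicShift p B) →*
    Abelianization B :=
  SemidirectProduct.lift (baseProd p) 1 (by
    intro c
    ext f
    simpa using baseProd_shift p c f)

lemma of_inl_shift (c : Multiplicative (ZMod p)) (f : Fin p → B) :
    Abelianization.of (inl (cyclicShift p B c f) :
        SemidirectProduct (Fin p → B) (Multiplicative (ZMod p)) (cyclicShift p B)) =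
      Abelianization.of (inl f) := by
  rw [inl_aut, map_mul, map_mul, map_inv, mul_right_comm]
  simp

lemma of_inl_single (i : Fin p) (b : B) :
    Abelianization.of (inl (Pi.mulSingle i b) :
        SemidirectProduct (Fin p → B) (Multiplicative (ZMod p)) (cyclicShift p B)) =
      Abelianization.of (inl (Pi.mulSingle (0 : Fin p) b)) := by
  have key : cyclicShift p B (Multiplicative.ofAdd ((i.val : ZMod p))) (Pi.mulSingle i b)
      = Pi.mulSingle (0 : Fin p) b := by
    funext j
    show Pi.mulSingle (M := fun _ : Fin p => B) i b (j + ((((i.val : ZMod p)).val : Fin p))) = _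
    rw [ZMod.val_natCast_of_lt i.isLt, Fin.cast_val_eq_self]
    rcases eq_or_ne j 0 with rfl | hj
    · rw [zero_add]; simp
    · rw [Pi.mulSingle_eq_of_ne (by simpa [add_eq_right] using hj),
        Pi.mulSingle_eq_of_ne hj]
  rw [← key, of_inl_shift]

end MeldrumAux
theorem stmt_5 (p : ℕ) [Fact p.Prime] (B : Type*) [Group B] (r : Fin p → B) :
    (⟨r, 1⟩ : SemidirectProduct (Fin p → B) (Multiplicative (ZMod p)) (cyclicShift p B)) ∈
        commutator (SemidirectProduct (Fin p → B) (Multiplicative (ZMod p)) (cyclicShift p B)) ↔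
      (List.ofFn r).prod ∈ commutator B := by
  have hNZ : NeZero p := ⟨(Fact.out : p.Prime).ne_zero⟩
  have hmk : (⟨r, 1⟩ : SemidirectProduct (Fin p → B) (Multiplicative (ZMod p))
      (cyclicShift p B)) = SemidirectProduct.inl r := rfl
  constructor
  · intro h
    have h1 : wreathProd p B (SemidirectProduct.inl r) = 1 :=
      Abelianization.commutator_subset_ker (wreathProd p B) (hmk ▸ h)
    have h2 : wreathProd p B (SemidirectProduct.inl r) =
        Abelianization.of ((List.ofFn r).prod) := by
      rw [wreathProd, SemidirectProduct.lift_inl]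
      show ∏ i, Abelianization.of (r i) = _
      rw [map_list_prod, List.map_ofFn, List.prod_ofFn]
      rfl
    rw [h2] at h1
    exact (abelOfEqOne _).mp h1
  · intro h
    set ψ : B →* Abelianization (SemidirectProduct (Fin p → B) (Multiplicative (ZMod p))
        (cyclicShift p B)) :=
      (Abelianization.of).comp (SemidirectProduct.inl.comp
        (MonoidHom.mulSingle (fun _ : Fin p => B) 0)) with hψ
    have h1 : Abelianization.of (SemidirectProduct.inl r :
        SemidirectProduct (Fin p → B) (Multiplicative (ZMod p)) (cyclicShift p B)) =
        ψ ((List.ofFn r).prod) := by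
      calc Abelianization.of (SemidirectProduct.inl r :
            SemidirectProduct (Fin p → B) (Multiplicative (ZMod p)) (cyclicShift p B))
          = ∏ i, Abelianization.of (SemidirectProduct.inl (Pi.mulSingle i (r i)) :
              SemidirectProduct (Fin p → B) (Multiplicative (ZMod p)) (cyclicShift p B)) := by
            conv_lhs => rw [← Finset.noncommProd_mulSingle r]
            rw [show Abelianization.of (SemidirectProduct.inl
                (Finset.univ.noncommProd (fun i => Pi.mulSingle i (r i)) fun i _ j _ hij =>
                  Pi.mulSingle_apply_commute r i j) :
                SemidirectProduct (Fin p → B) (Multiplicative (ZMod p)) (cyclicShift p B)) =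
              (Abelianization.of.comp SemidirectProduct.inl)
                (Finset.univ.noncommProd (fun i => Pi.mulSingle i (r i)) fun i _ j _ hij =>
                  Pi.mulSingle_apply_commute r i j) from rfl]
            refine (Finset.map_noncommProd _ _ _ _).trans ((Finset.noncommProd_eq_prod _ _).trans ?_)
            rfl
        _ = ∏ i, ψ (r i) := Finset.prod_congr rfl fun i _ => of_inl_single p i (r i)
        _ = ψ ((List.ofFn r).prod) := by
            rw [map_list_prod, List.map_ofFn, List.prod_ofFn]
            rfl
    have h2 : ψ ((List.ofFn r).prod) = 1 := Abelianization.commutator_subset_ker ψ h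
    rw [hmk]
    exact (abelOfEqOne _).mp (h1.trans h2)
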